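/- In U(𝔰𝔩₂(ℂ)) with generators X, Y, Z satisfying [X,Y]=Z, [Y,Z]=X, [Z,X]=Y, the set {Xᵐ Yⁿ Zᵛ (P−c)ᵏ : m,n,k ∈ ℕ, ν ∈ {0,1}} spans U(𝔰𝔩₂(ℂ)), where P = X²+Y²+Z² and c ∈ ℂ; equivalently, the images [Xᵐ Yⁿ Zᵛ] with m,n ∈ ℕ, ν ∈ {0,1} span the quotient U(𝔰𝔩₂(ℂ))/(P−c). -/

import Mathlib

open UniversalEnvelopingAlgebra

namespace Sl2SpanAux

variable {A : Type*} [Ring A] [Algebra ℂ A]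

/-- generic: image of a span under `t ↦ p*t*q` lands in a submodule. -/
lemma mul_span_mul {s : Set A} {b : A} (hb : b ∈ Submodule.span ℂ s) (p q : A)
    {T : Submodule ℂ A} (h : ∀ u ∈ s, p*u*q ∈ T) : p*b*q ∈ T := by
  induction hb using Submodule.span_induction with
  | mem u hu => exact h u hu
  | zero => simpa using T.zero_mem
  | add u v _ _ hu hv => simpa [mul_add, add_mul] using T.add_mem hu hv
  | smul r u _ hu =>
      have : p*(r • u)*q = r • (p*u*q) := by
        rw [mul_smul_comm, smul_mul_assoc]
      rw [this]; exact T.smul_mem r hu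

lemma span_mul {s : Set A} {b : A} (hb : b ∈ Submodule.span ℂ s) (q : A)
    {T : Submodule ℂ A} (h : ∀ u ∈ s, u*q ∈ T) : b*q ∈ T := by
  have := mul_span_mul hb 1 q (fun u hu => by simpa using h u hu)
  simpa using this

lemma mul_span {s : Set A} {b : A} (hb : b ∈ Submodule.span ℂ s) (p : A)
    {T : Submodule ℂ A} (h : ∀ u ∈ s, p*u ∈ T) : p*b ∈ T := by
  have := mul_span_mul hb p 1 (fun u hu => by simpa using h u hu)
  simpa using this

variable (x y z : A)

/-- auxiliary spanning set for commutation estimates -/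
def Bset (n : ℕ) : Set A := {u | ∃ j, j < n ∧ (u = x*y^j ∨ u = y^j*z ∨ u = y^j)}

lemma Bset_mono {m n : ℕ} (h : m ≤ n) : Bset x y z m ⊆ Bset x y z n := by
  rintro u ⟨j, hj, hu⟩; exact ⟨j, lt_of_lt_of_le hj h, hu⟩

lemma Bspan_mono {m n : ℕ} (h : m ≤ n) :
    Submodule.span ℂ (Bset x y z m) ≤ Submodule.span ℂ (Bset x y z n) :=
  Submodule.span_mono (Bset_mono x y z h)

variable (hxy : x*y = y*x + z) (hyz : y*z = z*y + x) (hzx : z*x = x*z + y)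

include hxy hyz hzx in
lemma Qlem : ∀ n : ℕ, y^n*x - x*y^n ∈ Submodule.span ℂ (Bset x y z n) ∧
    z*y^n - y^n*z ∈ Submodule.span ℂ (Bset x y z n) := by
  have c_yx : y*x = x*y - z := by rw [hxy]; abel
  have c_zy : z*y = y*z - x := by rw [hyz]; abel
  intro n
  induction n using Nat.strong_induction_on with
  | _ n IH =>
    match n with
    | 0 => constructor <;> simp
    | (n+1) =>
      have hn : n < n + 1 := Nat.lt_succ_self n
      obtain ⟨hb1, hb2⟩ := IH n hn
      constructor
      · -- y^(n+1)*x - x*y^(n+1)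
        have e1 : y^(n+1)*x = (y^n*x)*y - y^n*z := by
          rw [pow_succ, mul_assoc, c_yx, mul_sub, ← mul_assoc]
        have e2 : y^n*x = x*y^n + (y^n*x - x*y^n) := by abel
        have key : y^(n+1)*x - x*y^(n+1) = (y^n*x - x*y^n)*y - y^n*z := by
          rw [e1]; nth_rewrite 1 [e2]
          rw [add_mul, pow_succ, mul_assoc]; abel
        rw [key]
        refine Submodule.sub_mem _ ?_ (Submodule.subset_span ⟨n, hn, Or.inr (Or.inl rfl)⟩)
        refine span_mul hb1 y ?_
        rintro u ⟨j, hj, (rfl | rfl | rfl)⟩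
        · -- (x*y^j)*y
          have : (x*y^j)*y = x*y^(j+1) := by rw [mul_assoc, ← pow_succ]
          rw [this]
          exact Submodule.subset_span ⟨j+1, Nat.succ_lt_succ hj, Or.inl rfl⟩
        · -- (y^j*z)*y = y^(j+1)*z - y^j*x
          have e3 : (y^j*z)*y = y^(j+1)*z - y^j*x := by
            rw [mul_assoc, c_zy, mul_sub, ← mul_assoc, ← pow_succ]
          have e4 : y^j*x = x*y^j + (y^j*x - x*y^j) := by abel
          rw [e3, e4]
          have hj' : j < n + 1 := lt_trans hj hn
          refine Submodule.sub_mem _ (Submodule.subset_span ⟨j+1, Nat.succ_lt_succ hj, Or.inr (Or.inl rfl)⟩) ?_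
          exact Submodule.add_mem _ (Submodule.subset_span ⟨j, hj', Or.inl rfl⟩)
            (Bspan_mono x y z (le_of_lt hj') ((IH j (lt_trans hj hn)).1))
        · -- y^j*y
          have : y^j*y = y^(j+1) := by rw [← pow_succ]
          rw [this]
          exact Submodule.subset_span ⟨j+1, Nat.succ_lt_succ hj, Or.inr (Or.inr rfl)⟩
      · -- z*y^(n+1) - y^(n+1)*z
        have e1 : z*y^(n+1) = y*(z*y^n) - x*y^n := by
          rw [pow_succ', ← mul_assoc, c_zy, sub_mul, mul_assoc]
        have e2 : z*y^n = y^n*z + (z*y^n - y^n*z) := by abel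
        have key : z*y^(n+1) - y^(n+1)*z = y*(z*y^n - y^n*z) - x*y^n := by
          rw [e1]; nth_rewrite 1 [e2]
          rw [mul_add, pow_succ', mul_assoc]; abel
        rw [key]
        refine Submodule.sub_mem _ ?_ (Submodule.subset_span ⟨n, hn, Or.inl rfl⟩)
        refine mul_span hb2 y ?_
        rintro u ⟨j, hj, (rfl | rfl | rfl)⟩
        · -- y*(x*y^j) = x*y^(j+1) - z*y^j
          have e3 : y*(x*y^j) = x*y^(j+1) - z*y^j := by
            rw [← mul_assoc, c_yx, sub_mul, mul_assoc, ← pow_succ']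
          have e4 : z*y^j = y^j*z + (z*y^j - y^j*z) := by abel
          rw [e3, e4]
          have hj' : j < n + 1 := lt_trans hj hn
          refine Submodule.sub_mem _ (Submodule.subset_span ⟨j+1, Nat.succ_lt_succ hj, Or.inl rfl⟩) ?_
          exact Submodule.add_mem _ (Submodule.subset_span ⟨j, hj', Or.inr (Or.inl rfl)⟩)
            (Bspan_mono x y z (le_of_lt hj') ((IH j (lt_trans hj hn)).2))
        · -- y*(y^j*z) = y^(j+1)*z
          have : y*(y^j*z) = y^(j+1)*z := by rw [← mul_assoc, ← pow_succ']
          rw [this]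
          exact Submodule.subset_span ⟨j+1, Nat.succ_lt_succ hj, Or.inr (Or.inl rfl)⟩
        · have : y*y^j = y^(j+1) := by rw [← pow_succ']
          rw [this]
          exact Submodule.subset_span ⟨j+1, Nat.succ_lt_succ hj, Or.inr (Or.inr rfl)⟩


variable (c : ℂ)

/-- the shifted Casimir -/
noncomputable def Pc : A := x^2+y^2+z^2 - algebraMap ℂ A c

/-- the monomial set -/
def monoSet : Set A := {u | ∃ m nn k ν : ℕ, ν ≤ 1 ∧
  u = x^m*y^nn*z^ν*(Pc x y z c)^k}

lemma mono_mem {m nn k ν : ℕ} (h : ν ≤ 1) :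
    x^m*y^nn*z^ν*(Pc x y z c)^k ∈ Submodule.span ℂ (monoSet x y z c) :=
  Submodule.subset_span ⟨m, nn, k, ν, h, rfl⟩

lemma mxy_mem (m nn : ℕ) : x^m*y^nn ∈ Submodule.span ℂ (monoSet x y z c) := by
  have := mono_mem x y z c (m := m) (nn := nn) (k := 0) (ν := 0) (Nat.zero_le 1)
  simpa using this

lemma mxyz_mem (m nn : ℕ) : (x^m*y^nn)*z ∈ Submodule.span ℂ (monoSet x y z c) := by
  have := mono_mem x y z c (m := m) (nn := nn) (k := 0) (ν := 1) (le_refl 1)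
  simpa using this

lemma mxyP_mem (m nn k : ℕ) :
    (x^m*y^nn)*(Pc x y z c)^k ∈ Submodule.span ℂ (monoSet x y z c) := by
  have := mono_mem x y z c (m := m) (nn := nn) (k := k) (ν := 0) (Nat.zero_le 1)
  simpa using this

/-- x-power times B-generator lands in S -/
lemma xB_mem {M n : ℕ} {u : A} (hu : u ∈ Bset x y z n) :
    x^M * u ∈ Submodule.span ℂ (monoSet x y z c) := by
  obtain ⟨j, _, (rfl | rfl | rfl)⟩ := hu
  · have : x^M*(x*y^j) = x^(M+1)*y^j := by rw [← mul_assoc, ← pow_succ]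
    rw [this]; exact mxy_mem x y z c _ _
  · have : x^M*(y^j*z) = (x^M*y^j)*z := by rw [mul_assoc]
    rw [this]; exact mxyz_mem x y z c _ _
  · exact mxy_mem x y z c _ _

lemma xb_mem {M n : ℕ} {b : A} (hb : b ∈ Submodule.span ℂ (Bset x y z n)) :
    x^M * b ∈ Submodule.span ℂ (monoSet x y z c) :=
  mul_span hb (x^M) (fun u hu => xB_mem x y z c hu)

include hxy hyz hzx in
lemma xyx_mem (M N : ℕ) :
    (x^M*y^N)*x ∈ Submodule.span ℂ (monoSet x y z c) := by
  have e2 : y^N*x = x*y^N + (y^N*x - x*y^N) := by abel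
  have key : (x^M*y^N)*x = x^(M+1)*y^N + x^M*(y^N*x - x*y^N) := by
    rw [mul_assoc]; nth_rewrite 1 [e2]
    rw [mul_add, ← mul_assoc, ← pow_succ]
  rw [key]
  exact Submodule.add_mem _ (mxy_mem x y z c _ _)
    (xb_mem x y z c (Qlem x y z hxy hyz hzx N).1)

include hxy hyz hzx in
lemma Dlem : ∀ n : ℕ, (∀ m : ℕ,
      ((x^m*y^n)*z)*x ∈ Submodule.span ℂ (monoSet x y z c)) ∧
    (∀ m : ℕ, ((x^m*y^n)*z)*z ∈ Submodule.span ℂ (monoSet x y z c)) := by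
  have c_zx : z*x = x*z + y := hzx
  have hz2 : z*z = Pc x y z c + algebraMap ℂ A c - x*x - y*y := by
    simp only [Pc, pow_two]; abel
  intro n
  induction n using Nat.strong_induction_on with
  | _ n IH =>
    have hyxn : y^n*x = x*y^n + (y^n*x - x*y^n) := by abel
    have hbn := (Qlem x y z hxy hyz hzx n).1
    constructor
    · -- ((x^m*y^n)*z)*x
      intro m
      have key : ((x^m*y^n)*z)*x = (x^m*(y^n*x))*z + x^m*y^(n+1) := by
        rw [mul_assoc (x^m*y^n) z x, c_zx, mul_add]
        simp only [mul_assoc, pow_succ]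
      rw [key]
      refine Submodule.add_mem _ ?_ (mxy_mem x y z c _ _)
      nth_rewrite 1 [hyxn]
      rw [mul_add, add_mul]
      refine Submodule.add_mem _ ?_ ?_
      · have : (x^m*(x*y^n))*z = (x^(m+1)*y^n)*z := by rw [← mul_assoc, ← pow_succ]
        rw [this]; exact mxyz_mem x y z c _ _
      · refine mul_span_mul hbn (x^m) z ?_
        rintro u ⟨j, hj, (rfl | rfl | rfl)⟩
        · have : x^m*(x*y^j)*z = (x^(m+1)*y^j)*z := by simp only [pow_succ, mul_assoc]
          rw [this]; exact mxyz_mem x y z c _ _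
        · have : x^m*(y^j*z)*z = ((x^m*y^j)*z)*z := by rw [← mul_assoc]
          rw [this]; exact (IH j hj).2 m
        · have : x^m*y^j*z = (x^m*y^j)*z := rfl
          rw [this]; exact mxyz_mem x y z c _ _
    · -- ((x^m*y^n)*z)*z
      intro m
      have key : ((x^m*y^n)*z)*z = (x^m*y^n)*(Pc x y z c)^1
          + (x^m*y^n)*algebraMap ℂ A c - ((x^m*y^n)*x)*x - x^m*y^(n+2) := by
        rw [mul_assoc (x^m*y^n) z z, hz2, pow_one]
        rw [mul_sub, mul_sub, mul_add, mul_assoc (x^m*y^n) x x,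
          mul_assoc (x^m) (y^n) (y*y), ← mul_assoc (y^n) y y,
          show y^n*y*y = y^(n+2) by rw [← pow_succ, ← pow_succ], mul_assoc]
      rw [key]
      refine Submodule.sub_mem _ (Submodule.sub_mem _ (Submodule.add_mem _
        (mxyP_mem x y z c _ _ _) ?_) ?_) (mxy_mem x y z c _ _)
      · rw [← Algebra.commutes, ← Algebra.smul_def]
        exact Submodule.smul_mem _ _ (mxy_mem x y z c _ _)
      · -- ((x^m*y^n)*x)*x
        have key2 : ((x^m*y^n)*x)*x = (x^(m+1)*y^n)*x + (x^m*(y^n*x - x*y^n))*x := by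
          rw [mul_assoc (x^m) (y^n) x]; nth_rewrite 1 [hyxn]
          rw [mul_add, add_mul, ← mul_assoc (x^m) x (y^n), ← pow_succ]
        rw [key2]
        refine Submodule.add_mem _ (xyx_mem x y z hxy hyz hzx c _ _) ?_
        refine mul_span_mul hbn (x^m) x ?_
        rintro u ⟨j, hj, (rfl | rfl | rfl)⟩
        · have : x^m*(x*y^j)*x = (x^(m+1)*y^j)*x := by simp only [pow_succ, mul_assoc]
          rw [this]; exact xyx_mem x y z hxy hyz hzx c _ _
        · have : x^m*(y^j*z)*x = ((x^m*y^j)*z)*x := by rw [← mul_assoc]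
          rw [this]; exact (IH j hj).1 m
        · exact xyx_mem x y z hxy hyz hzx c _ _

-- Centrality of the Casimir.
include hxy hyz hzx in
lemma Pc_comm_x : (Pc x y z c) * x = x * (Pc x y z c) := by
  have c_yx : y*x = x*y - z := by rw [hxy]; abel
  have h : (x^2+y^2+z^2)*x = x*(x^2+y^2+z^2) := by
    simp only [pow_two, add_mul, mul_add, mul_assoc]
    rw [show y*(y*x) = y*(x*y) - y*z by rw [c_yx, mul_sub],
        show y*(x*y) = (y*x)*y by rw [mul_assoc],
        c_yx, show z*(z*x) = z*(x*z) + z*y by rw [hzx, mul_add],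
        show z*(x*z) = (z*x)*z by rw [mul_assoc], hzx]
    simp only [sub_mul, add_mul, mul_assoc]
    abel
  simp only [Pc, sub_mul, mul_sub, h]
  rw [Algebra.commutes]

include hxy hyz hzx in
lemma Pc_comm_y : (Pc x y z c) * y = y * (Pc x y z c) := by
  have c_zy : z*y = y*z - x := by rw [hyz]; abel
  have h : (x^2+y^2+z^2)*y = y*(x^2+y^2+z^2) := by
    simp only [pow_two, add_mul, mul_add, mul_assoc]
    rw [show x*(x*y) = x*(y*x) + x*z by rw [hxy, mul_add],
        show x*(y*x) = (x*y)*x by rw [mul_assoc],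
        hxy, show z*(z*y) = z*(y*z) - z*x by rw [c_zy, mul_sub],
        show z*(y*z) = (z*y)*z by rw [mul_assoc], c_zy]
    simp only [sub_mul, add_mul, mul_assoc]
    abel
  simp only [Pc, sub_mul, mul_sub, h]
  rw [Algebra.commutes]

include hxy hyz hzx in
lemma Pc_comm_z : (Pc x y z c) * z = z * (Pc x y z c) := by
  have c_xz : x*z = z*x - y := by rw [hzx]; abel
  have h : (x^2+y^2+z^2)*z = z*(x^2+y^2+z^2) := by
    simp only [pow_two, add_mul, mul_add, mul_assoc]
    rw [show x*(x*z) = x*(z*x) - x*y by rw [c_xz, mul_sub],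
        show x*(z*x) = (x*z)*x by rw [mul_assoc],
        c_xz, show y*(y*z) = y*(z*y) + y*x by rw [hyz, mul_add],
        show y*(z*y) = (y*z)*y by rw [mul_assoc], hyz]
    simp only [sub_mul, add_mul, mul_assoc]
    abel
  simp only [Pc, sub_mul, mul_sub, h]
  rw [Algebra.commutes]

lemma SP_mem {k : ℕ} {s : A} (hs : s ∈ Submodule.span ℂ (monoSet x y z c)) :
    s * (Pc x y z c)^k ∈ Submodule.span ℂ (monoSet x y z c) := by
  refine span_mul hs _ ?_
  rintro u ⟨m, nn, k', ν, hν, rfl⟩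
  have : x^m*y^nn*z^ν*(Pc x y z c)^k' * (Pc x y z c)^k
      = x^m*y^nn*z^ν*(Pc x y z c)^(k'+k) := by rw [mul_assoc, ← pow_add]
  rw [this]; exact mono_mem x y z c hν

lemma Sclose_aux {s : A} (hs : s ∈ Submodule.span ℂ (monoSet x y z c)) (g : A)
    (hcommg : (Pc x y z c) * g = g * (Pc x y z c))
    (h0 : ∀ m nn : ℕ, (x^m*y^nn)*g ∈ Submodule.span ℂ (monoSet x y z c))
    (h1 : ∀ m nn : ℕ, ((x^m*y^nn)*z)*g ∈ Submodule.span ℂ (monoSet x y z c)) :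
    s * g ∈ Submodule.span ℂ (monoSet x y z c) := by
  refine span_mul hs g ?_
  rintro u ⟨m, nn, k, ν, hν, rfl⟩
  have hcomm : (Pc x y z c)^k * g = g * (Pc x y z c)^k :=
    Commute.pow_left hcommg k
  have e : x^m*y^nn*z^ν*(Pc x y z c)^k * g = ((x^m*y^nn*z^ν)*g) * (Pc x y z c)^k := by
    rw [mul_assoc (x^m*y^nn*z^ν) _ g, hcomm, ← mul_assoc]
  rw [e]
  refine SP_mem x y z c ?_
  interval_cases ν
  · simpa using h0 m nn
  · simpa using h1 m nn

include hxy hyz hzx in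
lemma Sclose_x {s : A} (hs : s ∈ Submodule.span ℂ (monoSet x y z c)) :
    s * x ∈ Submodule.span ℂ (monoSet x y z c) :=
  Sclose_aux x y z c hs x (Pc_comm_x x y z hxy hyz hzx c)
    (fun m nn => xyx_mem x y z hxy hyz hzx c m nn)
    (fun m nn => (Dlem x y z hxy hyz hzx c nn).1 m)

include hxy hyz hzx in
lemma Sclose_y {s : A} (hs : s ∈ Submodule.span ℂ (monoSet x y z c)) :
    s * y ∈ Submodule.span ℂ (monoSet x y z c) := by
  refine Sclose_aux x y z c hs y (Pc_comm_y x y z hxy hyz hzx c) ?_ ?_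
  · intro m nn
    have : (x^m*y^nn)*y = x^m*y^(nn+1) := by rw [mul_assoc, ← pow_succ]
    rw [this]; exact mxy_mem x y z c _ _
  · intro m nn
    have c_zy : z*y = y*z - x := by rw [hyz]; abel
    have e2 : ((x^m*y^nn)*z)*y = (x^m*y^(nn+1))*z - (x^m*y^nn)*x := by
      rw [mul_assoc (x^m*y^nn) z y, c_zy, mul_sub]
      simp only [mul_assoc, pow_succ]
    rw [e2]
    exact Submodule.sub_mem _ (mxyz_mem x y z c _ _) (xyx_mem x y z hxy hyz hzx c _ _)

include hxy hyz hzx in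
lemma Sclose_z {s : A} (hs : s ∈ Submodule.span ℂ (monoSet x y z c)) :
    s * z ∈ Submodule.span ℂ (monoSet x y z c) := by
  refine Sclose_aux x y z c hs z (Pc_comm_z x y z hxy hyz hzx c) ?_ ?_
  · intro m nn; exact mxyz_mem x y z c _ _
  · intro m nn; exact (Dlem x y z hxy hyz hzx c nn).2 m

lemma one_mem_S : (1 : A) ∈ Submodule.span ℂ (monoSet x y z c) := by
  have := mono_mem x y z c (m := 0) (nn := 0) (k := 0) (ν := 0) (Nat.zero_le 1)
  simpa using this

end Sl2SpanAux

/-- In `U(𝔰𝔩₂(ℂ))` with generators `X, Y, Z` satisfying `[X,Y]=Z`, `[Y,Z]=X`, `[Z,X]=Y`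
and `P = X² + Y² + Z²`, the elements `Xᵐ Yⁿ Zᵛ (P − c)ᵏ` with `m, n, k ∈ ℕ`, `ν ∈ {0,1}`
span `U(𝔰𝔩₂(ℂ))`; hence the classes `[Xᵐ Yⁿ Zᵛ]` span the quotient by `(P − c)`. -/
theorem monomials_span_sl2
    {L : Type*} [LieRing L] [LieAlgebra ℂ L]
    (X Y Z : L) (hspan : Submodule.span ℂ {X, Y, Z} = ⊤)
    (h1 : ⁅X, Y⁆ = Z) (h2 : ⁅Y, Z⁆ = X) (h3 : ⁅Z, X⁆ = Y) (c : ℂ) :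
    Submodule.span ℂ
      {u : UniversalEnvelopingAlgebra ℂ L | ∃ (m nn k ν : ℕ), ν ≤ 1 ∧
        u = ι ℂ X ^ m * ι ℂ Y ^ nn * ι ℂ Z ^ ν *
          (ι ℂ X ^ 2 + ι ℂ Y ^ 2 + ι ℂ Z ^ 2
            - algebraMap ℂ (UniversalEnvelopingAlgebra ℂ L) c) ^ k} = ⊤ := by
  classical
  letI : LieRing (UniversalEnvelopingAlgebra ℂ L) := LieRing.ofAssociativeRing
  set x : UniversalEnvelopingAlgebra ℂ L := ι ℂ X with hx
  set y : UniversalEnvelopingAlgebra ℂ L := ι ℂ Y with hy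
  set z : UniversalEnvelopingAlgebra ℂ L := ι ℂ Z with hz
  have hZ : z = x*y - y*x := by
    rw [hx, hy, hz, ← h1, LieHom.map_lie, Ring.lie_def]
  have hX : x = y*z - z*y := by
    rw [hx, hy, hz, ← h2, LieHom.map_lie, Ring.lie_def]
  have hY : y = z*x - x*z := by
    rw [hx, hy, hz, ← h3, LieHom.map_lie, Ring.lie_def]
  have hxy : x*y = y*x + z := by rw [hZ]; abel
  have hyz : y*z = z*y + x := by rw [hX]; abel
  have hzx : z*x = x*z + y := by rw [hY]; abel
  have hset : {u : UniversalEnvelopingAlgebra ℂ L | ∃ (m nn k ν : ℕ), ν ≤ 1 ∧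
        u = x ^ m * y ^ nn * z ^ ν *
          (x ^ 2 + y ^ 2 + z ^ 2
            - algebraMap ℂ (UniversalEnvelopingAlgebra ℂ L) c) ^ k}
      = Sl2SpanAux.monoSet x y z c := rfl
  rw [hset, eq_top_iff]
  rintro u -
  have key : ∀ t : TensorAlgebra ℂ L,
      ∀ s ∈ Submodule.span ℂ (Sl2SpanAux.monoSet x y z c),
        s * (mkAlgHom ℂ L t) ∈ Submodule.span ℂ (Sl2SpanAux.monoSet x y z c) := by
    intro t
    induction t using TensorAlgebra.induction with
    | algebraMap r =>
        intro s hs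
        rw [AlgHom.commutes]
        have : s * algebraMap ℂ _ r = r • s := by
          rw [← Algebra.commutes, ← Algebra.smul_def]
        rw [this]
        exact Submodule.smul_mem _ r hs
    | ι w =>
        intro s hs
        rw [← UniversalEnvelopingAlgebra.ι_apply]
        have hw : w ∈ Submodule.span ℂ ({X, Y, Z} : Set L) := by
          rw [hspan]; trivial
        induction hw using Submodule.span_induction with
        | mem v hv =>
            simp only [Set.mem_insert_iff, Set.mem_singleton_iff] at hv
            rcases hv with rfl | rfl | rfl
            · exact Sl2SpanAux.Sclose_x x y z hxy hyz hzx c hs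
            · exact Sl2SpanAux.Sclose_y x y z hxy hyz hzx c hs
            · exact Sl2SpanAux.Sclose_z x y z hxy hyz hzx c hs
        | zero => simpa using Submodule.zero_mem _
        | add v v' _ _ hv hv' =>
            rw [map_add, mul_add]
            exact Submodule.add_mem _ hv hv'
        | smul r v _ hv =>
            rw [map_smul, mul_smul_comm]
            exact Submodule.smul_mem _ r hv
    | mul a b ha hb =>
        intro s hs
        rw [map_mul, ← mul_assoc]
        exact hb _ (ha _ hs)
    | add a b ha hb =>
        intro s hs
        rw [map_add, mul_add]
        exact Submodule.add_mem _ (ha s hs) (hb s hs)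
  obtain ⟨t, rfl⟩ : ∃ t, mkAlgHom ℂ L t = u := RingCon.mkₐ_surjective (α := ℂ) (UniversalEnvelopingAlgebra.ringCon ℂ L) u
  have := key t 1 (Sl2SpanAux.one_mem_S x y z c)
  simpa using this
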